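/- The localization of the Stanley–Reisner ring k[Δ] at the prime ideal P_F = (x_j : j ∉ F) associated to a face F is isomorphic (as a k-algebra, up to further localization at the maximal ideal) to the Laurent-polynomial extension k[lk F][x_i^{±1} : i ∈ F] localized appropriately; in particular, inverting the variables indexed by F in k[Δ] yields a ring isomorphic to k[lk F][x_i^{±1} : i ∈ F]. -/

import Mathlib

set_option synthInstance.maxHeartbeats 1000000
set_option maxHeartbeats 1000000

open MvPolynomial

variable (n : ℕ) (k : Type) [Field k]

/-- The Stanley–Reisner ideal of a complex `K` on `[n]`. -/
noncomputable def srIdeal (K : Set (Finset (Fin n))) : Ideal (MvPolynomial (Fin n) k) :=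
  Ideal.span {p | ∃ s : Finset (Fin n), s ∉ K ∧ p = ∏ i ∈ s, (X i : MvPolynomial (Fin n) k)}

/-- The link of a face `F` of `Δ`. -/
def link (Δ : Set (Finset (Fin n))) (F : Finset (Fin n)) : Set (Finset (Fin n)) :=
  {G | G ∈ Δ ∧ F ∩ G = ∅ ∧ F ∪ G ∈ Δ}

/-- The Stanley–Reisner ring `k[lk F]` of the link, on the vertex set `[n] \ F`. -/
noncomputable abbrev linkRing (Δ : Set (Finset (Fin n))) (F : Finset (Fin n)) :=
  MvPolynomial {i : Fin n // i ∉ F} k ⧸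
    Ideal.span {p | ∃ s : Finset {i : Fin n // i ∉ F},
      s.image Subtype.val ∉ link n Δ F ∧
      p = ∏ i ∈ s, (X i : MvPolynomial {i : Fin n // i ∉ F} k)}

namespace SR5

open Finsupp AddMonoidAlgebra

/-! ### Exponential homomorphisms out of `ι →₀ ℤ` -/

section ExpHom

variable {ι : Type} {H : Type*} [CommGroup H]

/-- The homomorphism `ι →₀ ℤ → H` sending `single i 1` to `u i`. -/
noncomputable def expHom (u : ι → H) : Multiplicative (ι →₀ ℤ) →* H :=
  AddMonoidHom.toMultiplicativeLeft
    (Finsupp.liftAddHom fun i => zmultiplesHom (Additive H) (Additive.ofMul (u i)))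

lemma expHom_single (u : ι → H) (i : ι) (m : ℤ) :
    expHom u (Multiplicative.ofAdd (Finsupp.single i m)) = u i ^ m := by
  show Additive.toMul ((Finsupp.liftAddHom
      fun i => zmultiplesHom (Additive H) (Additive.ofMul (u i))) (Finsupp.single i m)) = _
  rw [Finsupp.liftAddHom_apply_single, zmultiplesHom_apply, toMul_zsmul]
  rfl

lemma expHom_ext (u : ι → H) (f : Multiplicative (ι →₀ ℤ) →* H)
    (h : ∀ i, f (Multiplicative.ofAdd (Finsupp.single i 1)) = u i) : f = expHom u := by
  unfold expHom
  rw [← Equiv.apply_symm_apply (AddMonoidHom.toMultiplicativeLeft (α := ι →₀ ℤ) (β := H)) f]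
  congr 1
  apply Finsupp.addHom_ext'
  intro i
  apply AddMonoidHom.ext_int
  simp only [AddMonoidHom.comp_apply, Finsupp.singleAddHom_apply,
    Finsupp.liftAddHom_apply_single, zmultiplesHom_apply, one_zsmul]
  show Additive.ofMul (f (Multiplicative.ofAdd (Finsupp.single i 1))) = _
  rw [h i]

end ExpHom

/-! ### Setup -/

variable (Δ : Set (Finset (Fin n))) (F : Finset (Fin n))

/-- The Stanley–Reisner ideal of the link. -/
noncomputable abbrev JJ : Ideal (MvPolynomial {i : Fin n // i ∉ F} k) :=
  Ideal.span {p | ∃ s : Finset {i : Fin n // i ∉ F},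
      s.image Subtype.val ∉ link n Δ F ∧
      p = ∏ i ∈ s, (X i : MvPolynomial {i : Fin n // i ∉ F} k)}

/-- The multiplicative set generated by the face variables. -/
noncomputable abbrev MM : Submonoid (MvPolynomial (Fin n) k ⧸ srIdeal n k Δ) :=
  Submonoid.closure ((fun i : Fin n => Ideal.Quotient.mk (srIdeal n k Δ) (X i)) '' ↑F)

/-- The Laurent extension of the link ring. -/
noncomputable abbrev BB : Type :=
  AddMonoidAlgebra (linkRing n k Δ F) ({i : Fin n // i ∈ F} →₀ ℤ)

noncomputable abbrev instCRlink : CommRing (linkRing n k Δ F) := Ideal.Quotient.commRing _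

noncomputable abbrev instCRquot : CommRing (MvPolynomial (Fin n) k ⧸ srIdeal n k Δ) :=
  Ideal.Quotient.commRing _

attribute [local instance] instCRlink instCRquot

lemma prod_mem_srIdeal {s : Finset (Fin n)} (hs : s ∉ Δ) :
    (∏ i ∈ s, X i : MvPolynomial (Fin n) k) ∈ srIdeal n k Δ :=
  Ideal.subset_span ⟨s, hs, rfl⟩

lemma mk_X_mem {i : Fin n} (hi : i ∈ F) :
    Ideal.Quotient.mk (srIdeal n k Δ) (X i) ∈ MM n k Δ F :=
  Submonoid.subset_closure ⟨i, hi, rfl⟩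

/-- The variables map `Fin n → BB`. -/
noncomputable def vB : Fin n → BB n k Δ F := fun i =>
  if h : i ∈ F then
    AddMonoidAlgebra.single (Finsupp.single (⟨i, h⟩ : {i : Fin n // i ∈ F}) (1 : ℤ)) 1
  else
    AddMonoidAlgebra.single 0
      (Ideal.Quotient.mk (JJ n k Δ F) (X (⟨i, h⟩ : {i : Fin n // i ∉ F})))

/-- The map `k[x] → BB`. -/
noncomputable def φ : MvPolynomial (Fin n) k →ₐ[k] BB n k Δ F := aeval (vB n k Δ F)

lemma φ_prod_X (s : Finset (Fin n)) :
    φ n k Δ F (∏ i ∈ s, X i) =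
      AddMonoidAlgebra.single
        (∑ i ∈ s, if h : i ∈ F then Finsupp.single (⟨i, h⟩ : {i : Fin n // i ∈ F}) (1 : ℤ) else 0)
        (Ideal.Quotient.mk (JJ n k Δ F)
          (∏ j ∈ s.subtype (· ∉ F), (X j : MvPolynomial {i : Fin n // i ∉ F} k))) := by
  classical
  induction s using Finset.induction_on with
  | empty =>
      have h0 : Finset.subtype (fun x => x ∉ F) (∅ : Finset (Fin n)) = ∅ := rfl
      rw [Finset.prod_empty, Finset.sum_empty, map_one, h0,
        Finset.prod_empty, map_one, ← AddMonoidAlgebra.one_def]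
  | @insert a s ha ih =>
      rw [Finset.prod_insert ha, map_mul, ih, Finset.sum_insert ha]
      have hXa : φ n k Δ F (X a) = vB n k Δ F a := aeval_X _ _
      rw [hXa]
      by_cases h : a ∈ F
      · have hsub : (insert a s).subtype (· ∉ F) = s.subtype (· ∉ F) := by
          ext j
          simp only [Finset.mem_subtype, Finset.mem_insert]
          exact ⟨fun h' => h'.resolve_left (fun e => j.prop (e ▸ h)), Or.inr⟩
        rw [hsub, vB, dif_pos h, dif_pos h, AddMonoidAlgebra.single_mul_single, one_mul]
      · have hsub : (insert a s).subtype (· ∉ F) =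
            insert (⟨a, h⟩ : {i : Fin n // i ∉ F}) (s.subtype (· ∉ F)) := by
          ext j
          simp only [Finset.mem_subtype, Finset.mem_insert, Subtype.ext_iff]
        have hnotmem : (⟨a, h⟩ : {i : Fin n // i ∉ F}) ∉ s.subtype (· ∉ F) := by
          simpa [Finset.mem_subtype] using ha
        rw [hsub, Finset.prod_insert hnotmem, vB, dif_neg h, dif_neg h,
          AddMonoidAlgebra.single_mul_single, zero_add, ← map_mul]

lemma sdiff_not_link (hΔ : ∀ s ∈ Δ, ∀ t ⊆ s, t ∈ Δ) {s : Finset (Fin n)} (hs : s ∉ Δ) :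
    s \ F ∉ link n Δ F := by
  rintro ⟨-, -, hun⟩
  exact hs (hΔ _ hun s (fun i hi => by
    by_cases h : i ∈ F
    · exact Finset.mem_union_left _ h
    · exact Finset.mem_union_right _ (Finset.mem_sdiff.2 ⟨hi, h⟩)))

lemma srIdeal_le_ker (hΔ : ∀ s ∈ Δ, ∀ t ⊆ s, t ∈ Δ) :
    srIdeal n k Δ ≤ RingHom.ker (φ n k Δ F).toRingHom := by
  rw [srIdeal, Ideal.span_le]
  rintro p ⟨s, hs, rfl⟩
  rw [SetLike.mem_coe, RingHom.mem_ker, AlgHom.toRingHom_eq_coe, RingHom.coe_coe, φ_prod_X]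
  have h0 : Ideal.Quotient.mk (JJ n k Δ F)
      (∏ j ∈ s.subtype (· ∉ F), (X j : MvPolynomial {i : Fin n // i ∉ F} k)) = 0 := by
    rw [Ideal.Quotient.eq_zero_iff_mem]
    refine Ideal.subset_span ⟨s.subtype (· ∉ F), ?_, rfl⟩
    have himg : Finset.image Subtype.val (s.subtype (· ∉ F)) = s \ F := by
      ext a
      simp [Finset.mem_subtype, Finset.mem_sdiff, and_comm]
    rw [himg]
    exact sdiff_not_link n Δ F hΔ hs
  rw [h0, AddMonoidAlgebra.single_zero]

/-- `φ` descends to the Stanley–Reisner ring. -/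
noncomputable def φA (hΔ : ∀ s ∈ Δ, ∀ t ⊆ s, t ∈ Δ) :
    (MvPolynomial (Fin n) k ⧸ srIdeal n k Δ) →+* BB n k Δ F :=
  Ideal.Quotient.lift (srIdeal n k Δ) (φ n k Δ F).toRingHom
    (fun _ ha => srIdeal_le_ker n k Δ F hΔ ha)

lemma φ_X_mem {i : Fin n} (h : i ∈ F) :
    φ n k Δ F (X i) =
      AddMonoidAlgebra.single (Finsupp.single (⟨i, h⟩ : {i : Fin n // i ∈ F}) (1 : ℤ)) 1 := by
  have hXa : φ n k Δ F (X i) = vB n k Δ F i := aeval_X _ _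
  rw [hXa, vB, dif_pos h]

lemma φ_X_not_mem {i : Fin n} (h : i ∉ F) :
    φ n k Δ F (X i) =
      AddMonoidAlgebra.single 0
        (Ideal.Quotient.mk (JJ n k Δ F) (X (⟨i, h⟩ : {i : Fin n // i ∉ F}))) := by
  have hXa : φ n k Δ F (X i) = vB n k Δ F i := aeval_X _ _
  rw [hXa, vB, dif_neg h]

lemma φ_C (c : k) :
    φ n k Δ F (C c) = AddMonoidAlgebra.single 0 (algebraMap k (linkRing n k Δ F) c) := by
  have : φ n k Δ F (C c) = algebraMap k (BB n k Δ F) c := by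
    rw [φ, ← MvPolynomial.algebraMap_eq, AlgHom.commutes]
  rw [this]
  rfl

/-- The units in `BB` given by the face variables. -/
noncomputable def wB : {i : Fin n // i ∈ F} → (BB n k Δ F)ˣ := fun i =>
  Units.map (AddMonoidAlgebra.of (linkRing n k Δ F) ({i : Fin n // i ∈ F} →₀ ℤ))
    (toUnits (Multiplicative.ofAdd (Finsupp.single i (1 : ℤ))))

lemma wB_coe (i : {i : Fin n // i ∈ F}) :
    (wB n k Δ F i : BB n k Δ F) = AddMonoidAlgebra.single (Finsupp.single i (1 : ℤ)) 1 := rfl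

lemma isUnit_φA (hΔ : ∀ s ∈ Δ, ∀ t ⊆ s, t ∈ Δ) (y : MM n k Δ F) :
    IsUnit (φA n k Δ F hΔ (y : MvPolynomial (Fin n) k ⧸ srIdeal n k Δ)) := by
  obtain ⟨y, hy⟩ := y
  refine Submonoid.closure_induction
    (motive := fun x _ => IsUnit (φA n k Δ F hΔ x)) (fun x hx => ?_)
    (by show IsUnit (φA n k Δ F hΔ 1); rw [map_one]; exact isUnit_one)
    (fun x y _ _ hx hy => by
      show IsUnit (φA n k Δ F hΔ (x * y)); rw [map_mul]; exact hx.mul hy) hy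
  obtain ⟨i, hi, rfl⟩ := hx
  show IsUnit (φA n k Δ F hΔ (Ideal.Quotient.mk (srIdeal n k Δ) (X i)))
  have h2 : φA n k Δ F hΔ (Ideal.Quotient.mk (srIdeal n k Δ) (X i)) = φ n k Δ F (X i) := rfl
  rw [h2, φ_X_mem n k Δ F hi, ← wB_coe]
  exact (wB n k Δ F ⟨i, hi⟩).isUnit

/-- The induced map from the localization. -/
noncomputable def ψ (hΔ : ∀ s ∈ Δ, ∀ t ⊆ s, t ∈ Δ) :
    Localization (MM n k Δ F) →+* BB n k Δ F :=
  IsLocalization.lift (isUnit_φA n k Δ F hΔ)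

lemma ψ_mk (hΔ : ∀ s ∈ Δ, ∀ t ⊆ s, t ∈ Δ) (p : MvPolynomial (Fin n) k) :
    ψ n k Δ F hΔ (algebraMap _ _ (Ideal.Quotient.mk (srIdeal n k Δ) p)) = φ n k Δ F p :=
  IsLocalization.lift_eq _ _

/-- The structure map on polynomials over the complement of `F`. -/
noncomputable def fRaw : MvPolynomial {i : Fin n // i ∉ F} k →+* Localization (MM n k Δ F) :=
  eval₂Hom ((algebraMap (MvPolynomial (Fin n) k ⧸ srIdeal n k Δ)
      (Localization (MM n k Δ F))).comp
      ((Ideal.Quotient.mk (srIdeal n k Δ)).comp (C : k →+* MvPolynomial (Fin n) k)))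
    (fun j => algebraMap _ _ (Ideal.Quotient.mk (srIdeal n k Δ) (X (j : Fin n))))

lemma unit_prod_F : IsUnit (algebraMap (MvPolynomial (Fin n) k ⧸ srIdeal n k Δ)
    (Localization (MM n k Δ F)) (Ideal.Quotient.mk (srIdeal n k Δ) (∏ i ∈ F, X i))) := by
  have hmem : Ideal.Quotient.mk (srIdeal n k Δ) (∏ i ∈ F, X i) ∈ MM n k Δ F := by
    rw [map_prod]
    exact Submonoid.prod_mem _ (fun i hi => mk_X_mem n k Δ F hi)
  exact IsLocalization.map_units _ (⟨_, hmem⟩ : MM n k Δ F)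

lemma JJ_le_ker (hΔ : ∀ s ∈ Δ, ∀ t ⊆ s, t ∈ Δ) :
    JJ n k Δ F ≤ RingHom.ker (fRaw n k Δ F) := by
  rw [JJ, Ideal.span_le]
  rintro p ⟨t, ht, rfl⟩
  rw [SetLike.mem_coe, RingHom.mem_ker]
  have h1 : fRaw n k Δ F (∏ j ∈ t, X j) =
      algebraMap _ _ (Ideal.Quotient.mk (srIdeal n k Δ)
        (∏ j ∈ t, X (j : Fin n))) := by
    rw [map_prod (fRaw n k Δ F) _ t, map_prod (Ideal.Quotient.mk (srIdeal n k Δ)) _ t,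
      map_prod (algebraMap (MvPolynomial (Fin n) k ⧸ srIdeal n k Δ)
        (Localization (MM n k Δ F))) _ t]
    exact Finset.prod_congr rfl fun j _ => eval₂Hom_X' _ _ _
  have himg : (∏ i ∈ t.image Subtype.val, (X i : MvPolynomial (Fin n) k)) =
      ∏ j ∈ t, X (j : Fin n) :=
    Finset.prod_image (fun x _ y _ h => Subtype.val_injective h)
  set S := t.image Subtype.val with hS
  have hSF : ∀ i ∈ S, i ∉ F := by
    intro i hi
    obtain ⟨j, _, rfl⟩ := Finset.mem_image.1 hi
    exact j.prop
  have hdisj : Disjoint F S := by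
    rw [Finset.disjoint_left]; exact fun a ha ha' => hSF a ha' ha
  have hFS : F ∪ S ∉ Δ := by
    intro hmem
    exact ht ⟨hΔ _ hmem S Finset.subset_union_right,
      by rwa [← Finset.disjoint_iff_inter_eq_empty], hmem⟩
  have h0 : Ideal.Quotient.mk (srIdeal n k Δ) ((∏ i ∈ F, X i) * ∏ i ∈ S, X i) = 0 := by
    rw [← Finset.prod_union hdisj, Ideal.Quotient.eq_zero_iff_mem]
    exact prod_mem_srIdeal n k Δ hFS
  have h2 : algebraMap (MvPolynomial (Fin n) k ⧸ srIdeal n k Δ)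
      (Localization (MM n k Δ F)) (Ideal.Quotient.mk (srIdeal n k Δ) (∏ i ∈ S, X i)) = 0 := by
    rw [← (unit_prod_F n k Δ F).mul_right_eq_zero, ← map_mul, ← map_mul, h0, map_zero]
  rw [h1, ← himg]
  exact h2

/-- The map from the link ring to the localization. -/
noncomputable def fL (hΔ : ∀ s ∈ Δ, ∀ t ⊆ s, t ∈ Δ) :
    linkRing n k Δ F →+* Localization (MM n k Δ F) :=
  Ideal.Quotient.lift (JJ n k Δ F) (fRaw n k Δ F) (fun _ ha => JJ_le_ker n k Δ F hΔ ha)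

/-- The units in the localization given by the face variables. -/
noncomputable def uL : {i : Fin n // i ∈ F} → (Localization (MM n k Δ F))ˣ := fun i =>
  (IsLocalization.map_units (Localization (MM n k Δ F))
    (⟨Ideal.Quotient.mk (srIdeal n k Δ) (X (i : Fin n)), mk_X_mem n k Δ F i.prop⟩ :
      MM n k Δ F)).unit

lemma uL_coe (i : {i : Fin n // i ∈ F}) :
    (uL n k Δ F i : Localization (MM n k Δ F)) =
      algebraMap _ _ (Ideal.Quotient.mk (srIdeal n k Δ) (X (i : Fin n))) :=
  IsUnit.unit_spec _

/-- The grading monoid homomorphism into the localization. -/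
noncomputable def gLoc : Multiplicative ({i : Fin n // i ∈ F} →₀ ℤ) →* Localization (MM n k Δ F) :=
  (Units.coeHom _).comp (expHom (uL n k Δ F))

/-- The inverse map. -/
noncomputable def χ (hΔ : ∀ s ∈ Δ, ∀ t ⊆ s, t ∈ Δ) :
    BB n k Δ F →+* Localization (MM n k Δ F) :=
  AddMonoidAlgebra.liftNCRingHom (fL n k Δ F hΔ) (gLoc n k Δ F) (fun _ _ => Commute.all _ _)

lemma χ_single (hΔ : ∀ s ∈ Δ, ∀ t ⊆ s, t ∈ Δ) (a : {i : Fin n // i ∈ F} →₀ ℤ)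
    (b : linkRing n k Δ F) :
    χ n k Δ F hΔ (AddMonoidAlgebra.single a b) =
      fL n k Δ F hΔ b * gLoc n k Δ F (Multiplicative.ofAdd a) :=
  AddMonoidAlgebra.liftNC_single _ _ _ _

lemma algebraMap_linkRing (c : k) :
    algebraMap k (linkRing n k Δ F) c = Ideal.Quotient.mk (JJ n k Δ F) (C c) := rfl

lemma algebraMap_quot (c : k) :
    algebraMap k (MvPolynomial (Fin n) k ⧸ srIdeal n k Δ) c
      = Ideal.Quotient.mk (srIdeal n k Δ) (C c) := rfl

lemma fRaw_X (j : {i : Fin n // i ∉ F}) :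
    fRaw n k Δ F (X j) = algebraMap _ _ (Ideal.Quotient.mk (srIdeal n k Δ) (X (j : Fin n))) :=
  eval₂Hom_X' _ _ _

lemma fRaw_C (c : k) :
    fRaw n k Δ F (C c) = algebraMap _ _ (Ideal.Quotient.mk (srIdeal n k Δ) (C c)) :=
  eval₂Hom_C _ _ _

lemma gLoc_single (i : {i : Fin n // i ∈ F}) :
    gLoc n k Δ F (Multiplicative.ofAdd (Finsupp.single i (1 : ℤ))) =
      algebraMap _ _ (Ideal.Quotient.mk (srIdeal n k Δ) (X (i : Fin n))) := by
  show ((expHom (uL n k Δ F)) (Multiplicative.ofAdd (Finsupp.single i 1)) :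
    Localization (MM n k Δ F)) = _
  rw [expHom_single, zpow_one, uL_coe]

lemma fL_mk (hΔ : ∀ s ∈ Δ, ∀ t ⊆ s, t ∈ Δ) (q : MvPolynomial {i : Fin n // i ∉ F} k) :
    fL n k Δ F hΔ (Ideal.Quotient.mk (JJ n k Δ F) q) = fRaw n k Δ F q :=
  Ideal.Quotient.lift_mk _ _ _

lemma comp_id1 (hΔ : ∀ s ∈ Δ, ∀ t ⊆ s, t ∈ Δ) :
    (χ n k Δ F hΔ).comp (ψ n k Δ F hΔ) = RingHom.id _ := by
  apply IsLocalization.ringHom_ext (MM n k Δ F)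
  apply Ideal.Quotient.ringHom_ext
  apply MvPolynomial.ringHom_ext
  · intro c
    simp only [RingHom.comp_apply, RingHom.id_apply, Ideal.Quotient.mk_algebraMap]
    rw [ψ_mk, φ_C, χ_single, ofAdd_zero, map_one, mul_one, algebraMap_linkRing,
      fL_mk, fRaw_C]
  · intro i
    simp only [RingHom.comp_apply, RingHom.id_apply]
    rw [ψ_mk]
    by_cases h : i ∈ F
    · rw [φ_X_mem n k Δ F h, χ_single, map_one, one_mul]
      exact gLoc_single n k Δ F ⟨i, h⟩
    · rw [φ_X_not_mem n k Δ F h, χ_single, ofAdd_zero, map_one, mul_one,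
        fL_mk, fRaw_X]

lemma units_map_expHom (hΔ : ∀ s ∈ Δ, ∀ t ⊆ s, t ∈ Δ) :
    (Units.map (ψ n k Δ F hΔ).toMonoidHom).comp (expHom (uL n k Δ F)) =
      expHom (wB n k Δ F) := by
  refine expHom_ext (wB n k Δ F) _ ?_
  intro i
  refine Units.ext ?_
  rw [MonoidHom.comp_apply, Units.coe_map, expHom_single, zpow_one]
  show ψ n k Δ F hΔ (uL n k Δ F i : Localization (MM n k Δ F)) = _
  rw [uL_coe, ψ_mk, wB_coe, φ_X_mem n k Δ F i.prop]

lemma of_toHomUnits :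
    (AddMonoidAlgebra.of (linkRing n k Δ F) ({i : Fin n // i ∈ F} →₀ ℤ)).toHomUnits =
      expHom (wB n k Δ F) := by
  refine expHom_ext (wB n k Δ F) _ ?_
  intro i
  rfl

lemma comp_id2 (hΔ : ∀ s ∈ Δ, ∀ t ⊆ s, t ∈ Δ) :
    (ψ n k Δ F hΔ).comp (χ n k Δ F hΔ) = RingHom.id _ := by
  apply AddMonoidAlgebra.ringHom_ext
  · intro b
    obtain ⟨q, rfl⟩ := Ideal.Quotient.mk_surjective b
    rw [RingHom.comp_apply, RingHom.id_apply, χ_single, ofAdd_zero, map_one, mul_one,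
      fL_mk]
    have key : (ψ n k Δ F hΔ).comp (fRaw n k Δ F) =
        (AddMonoidAlgebra.singleZeroRingHom).comp
          ((Ideal.Quotient.mk (JJ n k Δ F)) :
            MvPolynomial {i : Fin n // i ∉ F} k →+* linkRing n k Δ F) := by
      apply MvPolynomial.ringHom_ext
      · intro c
        rw [RingHom.comp_apply, RingHom.comp_apply, fRaw_C, ψ_mk, φ_C,
          algebraMap_linkRing]
        rfl
      · intro j
        rw [RingHom.comp_apply, RingHom.comp_apply, fRaw_X, ψ_mk,
          φ_X_not_mem n k Δ F j.prop]
        rfl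
    exact DFunLike.congr_fun key q
  · intro a
    rw [RingHom.comp_apply, RingHom.id_apply, χ_single, map_one, one_mul]
    show ψ n k Δ F hΔ ((expHom (uL n k Δ F)) (Multiplicative.ofAdd a) :
      Localization (MM n k Δ F)) = _
    have hu : ∀ u : (Localization (MM n k Δ F))ˣ,
        ψ n k Δ F hΔ (u : Localization (MM n k Δ F)) =
          ((Units.map (ψ n k Δ F hΔ).toMonoidHom) u : BB n k Δ F) := fun u => rfl
    rw [hu, ← MonoidHom.comp_apply, units_map_expHom n k Δ F hΔ, ← of_toHomUnits]
    rfl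

end SR5

/-- Inverting the variables indexed by a face `F` in the Stanley–Reisner ring `k[Δ]`
yields a ring isomorphic (compatibly with the `k`-algebra structure maps) to the
Laurent-polynomial extension `k[lk F][x_i^{±1} : i ∈ F]`, realized as the group
algebra of `ℤ^F` over `k[lk F]`. -/
theorem stmt5 (Δ : Set (Finset (Fin n))) (hΔ : ∀ s ∈ Δ, ∀ t ⊆ s, t ∈ Δ)
    (F : Finset (Fin n)) (hF : F ∈ Δ) :
    ∃ e : Localization (Submonoid.closure
        ((fun i : Fin n => Ideal.Quotient.mk (srIdeal n k Δ) (X i)) '' ↑F)) ≃+*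
      AddMonoidAlgebra (linkRing n k Δ F) ({i : Fin n // i ∈ F} →₀ ℤ),
      ∀ c : k, e (algebraMap _ _ (algebraMap k (MvPolynomial (Fin n) k ⧸ srIdeal n k Δ) c))
        = algebraMap k _ c := by
  refine ⟨RingEquiv.ofRingHom (SR5.ψ n k Δ F hΔ) (SR5.χ n k Δ F hΔ)
    (SR5.comp_id2 n k Δ F hΔ) (SR5.comp_id1 n k Δ F hΔ), ?_⟩
  intro c
  show SR5.ψ n k Δ F hΔ _ = _
  rw [SR5.algebraMap_quot, SR5.ψ_mk, SR5.φ_C]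
  rfl
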